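/- In a public products game with f_θ(x_θ, X) = ⟨x_θ, c(X)⟩ − u_θ(x_θ), if c is strongly monotone with modulus β on M, then the game is aggregatively strongly monotone with modulus β: ∫_Θ ⟨g_x(θ) − g_y(θ), x_θ − y_θ⟩ dθ ≥ β‖∫x − ∫y‖² for all x, y ∈ L²([0,1], M). -/

import Mathlib

open Metric MeasureTheory
open scoped RealInnerProductSpace

/-- Lebesgue measure restricted to the player set `Θ = [0,1]`. -/
noncomputable def μ01 : Measure ℝ := volume.restrict (Set.Icc 0 1)

open InnerProductSpace Filter
open scoped Topology

lemma concave_first_order {T : ℕ} {s : Set (EuclideanSpace ℝ (Fin T))}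
    {f : EuclideanSpace ℝ (Fin T) → ℝ} (hf : ConcaveOn ℝ s f)
    {a b ga : EuclideanSpace ℝ (Fin T)} (ha : a ∈ s) (hb : b ∈ s)
    (hga : HasGradientAt f ga a) : f b - f a ≤ ⟪ga, b - a⟫ := by
  set φ : ℝ → ℝ := fun t => f (a + t • (b - a)) with hφdef
  have hline : HasDerivAt (fun t : ℝ => a + t • (b - a)) (b - a) 0 := by
    simpa using ((hasDerivAt_id (0:ℝ)).smul_const (b - a)).const_add a
  have hφ : HasDerivAt φ ⟪ga, b - a⟫ 0 := by
    have h0 : a + (0:ℝ) • (b - a) = a := by simp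
    have := (h0 ▸ hga.hasFDerivAt).comp_hasDerivAt 0 hline
    simpa [toDual_apply_apply, hφdef, Function.comp_def] using this
  have hslope : ∀ t ∈ Set.Ioc (0:ℝ) 1, f b - f a ≤ slope φ 0 t := by
    intro t ht
    have hcomb : a + t • (b - a) = (1 - t) • a + t • b := by module
    have hge : (1 - t) * f a + t * f b ≤ φ t := by
      show _ ≤ f (a + t • (b - a))
      rw [hcomb]
      exact hf.2 ha hb (by linarith [ht.2]) (le_of_lt ht.1) (by ring)
    have hφ0 : φ 0 = f a := by simp [hφdef]
    rw [slope_def_field, sub_zero, le_div_iff₀ ht.1]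
    nlinarith
  have htend : Tendsto (slope φ 0) (𝓝[>] 0) (𝓝 ⟪ga, b - a⟫) :=
    (hasDerivAt_iff_tendsto_slope.mp hφ).mono_left
      (nhdsWithin_mono 0 (fun x hx => ne_of_gt hx))
  exact ge_of_tendsto htend
    (eventually_of_mem (Ioc_mem_nhdsGT_of_mem ⟨le_refl 0, one_pos⟩) hslope)

lemma concave_grad_mono {T : ℕ} {s : Set (EuclideanSpace ℝ (Fin T))}
    {f : EuclideanSpace ℝ (Fin T) → ℝ} (hf : ConcaveOn ℝ s f)
    {a b ga gb : EuclideanSpace ℝ (Fin T)} (ha : a ∈ s) (hb : b ∈ s)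
    (hga : HasGradientAt f ga a) (hgb : HasGradientAt f gb b) :
    0 ≤ ⟪gb - ga, a - b⟫ := by
  have h1 := concave_first_order hf ha hb hga
  have h2 := concave_first_order hf hb ha hgb
  have e1 : ⟪gb - ga, a - b⟫ = ⟪gb, a - b⟫ + ⟪ga, b - a⟫ := by
    rw [inner_sub_left]
    have : (b : EuclideanSpace ℝ (Fin T)) - a = -(a - b) := by abel
    rw [this, inner_neg_right]; ring
  linarith

/-- Proposition `prop:monotonemap` v: a public products game with costs
`f_θ(x,X) = ⟨x, c(X)⟩ - u_θ(x)` where `c` is strongly monotone with modulus `β` on `M` and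
each `u_θ` is concave differentiable, is aggregatively strongly monotone with modulus `β`:
`∫ ⟨g_x(θ) - g_y(θ), x_θ - y_θ⟩ dθ ≥ β ‖∫x - ∫y‖²`. -/
theorem public_products_agg_strongly_monotone {T : ℕ} {L β : ℝ}
    (Ms : Set (EuclideanSpace ℝ (Fin T)))
    (hMconv : Convex ℝ Ms) (hMcomp : IsCompact Ms)
    (c : EuclideanSpace ℝ (Fin T) → EuclideanSpace ℝ (Fin T))
    (u : ℝ → EuclideanSpace ℝ (Fin T) → ℝ)
    (gu : ℝ → EuclideanSpace ℝ (Fin T) → EuclideanSpace ℝ (Fin T))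
    (hβ : 0 < β)
    (hcstrong : ∀ X ∈ Ms, ∀ Y ∈ Ms, β * ‖X - Y‖ ^ 2 ≤ ⟪c X - c Y, X - Y⟫)
    (hconc : ∀ θ ∈ Set.Icc (0:ℝ) 1, ConcaveOn ℝ Ms (u θ))
    (hgrad : ∀ θ ∈ Set.Icc (0:ℝ) 1, ∀ x ∈ Ms, HasGradientAt (u θ) (gu θ x) x)
    (hgub : ∀ θ x, ‖gu θ x‖ ≤ L)
    (hgumeas : ∀ x : ℝ → EuclideanSpace ℝ (Fin T), Measurable x →
      AEStronglyMeasurable (fun θ => gu θ (x θ)) μ01)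
    (x y : ℝ → EuclideanSpace ℝ (Fin T)) (hxm : Measurable x) (hym : Measurable y)
    (hx : ∀ θ ∈ Set.Icc (0:ℝ) 1, x θ ∈ Ms) (hy : ∀ θ ∈ Set.Icc (0:ℝ) 1, y θ ∈ Ms) :
    β * ‖(∫ t, x t ∂μ01) - (∫ t, y t ∂μ01)‖ ^ 2 ≤
      ∫ θ, ⟪(c (∫ t, x t ∂μ01) - gu θ (x θ)) - (c (∫ t, y t ∂μ01) - gu θ (y θ)),
            x θ - y θ⟫ ∂μ01 := by
  haveI : IsProbabilityMeasure μ01 := by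
    constructor; simp [μ01, Real.volume_Icc]
  haveI : IsFiniteMeasure μ01 := by infer_instance
  obtain ⟨C, hC⟩ := hMcomp.isBounded.exists_norm_le
  have haemem : ∀ᵐ θ ∂μ01, θ ∈ Set.Icc (0:ℝ) 1 := by
    unfold μ01; exact ae_restrict_mem measurableSet_Icc
  have hxint : Integrable x μ01 :=
    ⟨hxm.aestronglyMeasurable, HasFiniteIntegral.of_bounded
      (haemem.mono fun θ hθ => hC _ (hx θ hθ))⟩
  have hyint : Integrable y μ01 :=
    ⟨hym.aestronglyMeasurable, HasFiniteIntegral.of_bounded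
      (haemem.mono fun θ hθ => hC _ (hy θ hθ))⟩
  set X := ∫ t, x t ∂μ01 with hX
  set Y := ∫ t, y t ∂μ01 with hY
  have hXmem : X ∈ Ms := hMconv.integral_mem hMcomp.isClosed
    (haemem.mono fun θ hθ => hx θ hθ) hxint
  have hYmem : Y ∈ Ms := hMconv.integral_mem hMcomp.isClosed
    (haemem.mono fun θ hθ => hy θ hθ) hyint
  set v := c X - c Y with hv
  have hgx := hgumeas x hxm
  have hgy := hgumeas y hym
  have hd : Integrable (fun θ => x θ - y θ) μ01 := hxint.sub hyint
  have h1 : Integrable (fun θ => ⟪v, x θ - y θ⟫) μ01 := hd.const_inner v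
  have hL : (0:ℝ) ≤ L := (norm_nonneg _).trans (hgub 0 0)
  have h2 : Integrable (fun θ => ⟪gu θ (y θ) - gu θ (x θ), x θ - y θ⟫) μ01 := by
    refine ⟨(hgy.sub hgx).inner (hxm.aestronglyMeasurable.sub hym.aestronglyMeasurable),
      HasFiniteIntegral.of_bounded (C := (L + L) * (C + C)) (haemem.mono fun θ hθ => ?_)⟩
    calc ‖⟪gu θ (y θ) - gu θ (x θ), x θ - y θ⟫‖
        ≤ ‖gu θ (y θ) - gu θ (x θ)‖ * ‖x θ - y θ‖ := norm_inner_le_norm _ _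
      _ ≤ (L + L) * (C + C) := by
          apply mul_le_mul _ _ (norm_nonneg _) (by linarith)
          · exact (norm_sub_le _ _).trans (add_le_add (hgub _ _) (hgub _ _))
          · exact (norm_sub_le _ _).trans (add_le_add (hC _ (hx θ hθ)) (hC _ (hy θ hθ)))
  have hnn : 0 ≤ ∫ θ, ⟪gu θ (y θ) - gu θ (x θ), x θ - y θ⟫ ∂μ01 :=
    integral_nonneg_of_ae (haemem.mono fun θ hθ =>
      concave_grad_mono (hconc θ hθ) (hx θ hθ) (hy θ hθ)
        (hgrad θ hθ _ (hx θ hθ)) (hgrad θ hθ _ (hy θ hθ)))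
  have hsplit : ∫ θ, ⟪(c X - gu θ (x θ)) - (c Y - gu θ (y θ)), x θ - y θ⟫ ∂μ01
      = (∫ θ, ⟪v, x θ - y θ⟫ ∂μ01)
        + ∫ θ, ⟪gu θ (y θ) - gu θ (x θ), x θ - y θ⟫ ∂μ01 := by
    rw [← integral_add h1 h2]
    apply integral_congr_ae
    filter_upwards with θ
    have hre : (c X - gu θ (x θ)) - (c Y - gu θ (y θ))
        = v + (gu θ (y θ) - gu θ (x θ)) := by rw [hv]; abel
    rw [hre, inner_add_left]
  have hfirst : (∫ θ, ⟪v, x θ - y θ⟫ ∂μ01) = ⟪v, X - Y⟫ := by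
    rw [integral_inner hd, integral_sub hxint hyint]
  have hstr := hcstrong X hXmem Y hYmem
  rw [hsplit, hfirst]
  linarith
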